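/- Equip V with the right el^ε-action v_j·ℰ_i = δ_{ij}·(v_{i+1} + q^ε·v_{i-1}) and V^⊛ with the right el^{-ε}-action v^j·ℰ_i = δ_{i+2,j}·q^{-ε}·v^{i+1} + δ_{ij}·v^{i+1}, and let (·,·): V^⊛ × V → ℚ(q) be the ℚ(q)-bilinear pairing with (v^i, v_j) = δ_{ij}. Then (w·u, v) = (w, v·σ(u)) for all w ∈ V^⊛, v ∈ V and u ∈ el^{-ε}, where σ: el^{-ε} → el^{ε} is the algebra anti-isomorphism with σ(ℰ_i) = q^{-ε}·ℰ_{i+1}. -/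

import Mathlib

noncomputable section

open scoped TensorProduct

/-- The ground field `ℚ(q)`, rational functions over `ℚ`. -/
abbrev K : Type := RatFunc ℚ

/-- The variable `q ∈ ℚ(q)`. -/
def q : K := RatFunc.X

/-- `b i j = -2` if `j = i` or `j = i+1`, and `b i j = 4 · sgn(j-i) · (-1)^(j-i)` otherwise. -/
def b (i j : ℤ) : ℤ :=
  if j = i ∨ j = i + 1 then -2 else 4 * (j - i).sign * (-1) ^ (j - i).natAbs

/-- The generator `ℰ_i` inside the free algebra. -/
def Eι (i : ℤ) : FreeAlgebra K ℤ := FreeAlgebra.ι K i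

/-- The defining relations of the q-εlectrical algebra `el^ε`:
`ℰ_iℰ_j = q^{b_{ij}}ℰ_jℰ_i` for `|i-j| > 1`;
`q³ℰ_i²ℰ_{i+1} - [2]ℰ_iℰ_{i+1}ℰ_i + q^{-3}ℰ_{i+1}ℰ_i² = -q^ε[2]ℰ_i`; and
`q^{-3}ℰ_i²ℰ_{i-1} - [2]ℰ_iℰ_{i-1}ℰ_i + q³ℰ_{i-1}ℰ_i² = -q^ε[2]ℰ_i`,
where `[2] = q + q⁻¹`. -/
inductive elRel (ε : ℤ) : FreeAlgebra K ℤ → FreeAlgebra K ℤ → Prop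
  | distant (i j : ℤ) (h : 1 < |i - j|) :
      elRel ε (Eι i * Eι j) ((q ^ b i j) • (Eι j * Eι i))
  | up (i : ℤ) :
      elRel ε
        ((q ^ (3 : ℤ)) • (Eι i * Eι i * Eι (i + 1)) -
            (q + q⁻¹) • (Eι i * Eι (i + 1) * Eι i) +
            (q ^ (-3 : ℤ)) • (Eι (i + 1) * Eι i * Eι i))
        (-((q ^ ε * (q + q⁻¹)) • Eι i))
  | down (i : ℤ) :
      elRel ε
        ((q ^ (-3 : ℤ)) • (Eι i * Eι i * Eι (i - 1)) -
            (q + q⁻¹) • (Eι i * Eι (i - 1) * Eι i) +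
            (q ^ (3 : ℤ)) • (Eι (i - 1) * Eι i * Eι i))
        (-((q ^ ε * (q + q⁻¹)) • Eι i))

/-- The q-εlectrical algebra `el^ε`, presented by generators `ℰ_i` (`i ∈ ℤ`) and the
relations `elRel ε`. -/
abbrev el (ε : ℤ) : Type := RingQuot (elRel ε)

/-- The generator `ℰ_i` of `el^ε`. -/
def Egen (ε i : ℤ) : el ε := RingQuot.mkAlgHom K (elRel ε) (Eι i)

set_option synthInstance.maxHeartbeats 1000000
set_option maxHeartbeats 1000000

/-- The free `ℚ(q)`-module with basis indexed by `ℤ`, modelling both the natural module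
`V` (basis `v_i`) and its dual `V^⊛` (basis `v^i`). -/
abbrev Vmod : Type := ℤ →₀ K

/-- The `ℚ(q)`-bilinear pairing `(·,·) : V^⊛ × V → ℚ(q)` with `(v^i, v_j) = δ_{ij}`. -/
def pairV (w v : Vmod) : K := w.sum fun i c => c * v i

lemma pairV_zero_left (v : Vmod) : pairV 0 v = 0 := by
  simp [pairV]

lemma pairV_add_left (w w' v : Vmod) : pairV (w + w') v = pairV w v + pairV w' v := by
  classical
  exact Finsupp.sum_add_index' (fun i => zero_mul _) (fun i c d => add_mul _ _ _)

lemma pairV_single (j : ℤ) (c : K) (v : Vmod) : pairV (Finsupp.single j c) v = c * v j := by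
  classical
  exact Finsupp.sum_single_index (zero_mul _)

lemma pairV_smul_left (r : K) (w v : Vmod) : pairV (r • w) v = r * pairV w v := by
  classical
  induction w using Finsupp.induction_linear with
  | zero => simp [pairV_zero_left]
  | add w w' hw hw' =>
      rw [smul_add, pairV_add_left, pairV_add_left, hw, hw', mul_add]
  | single j c =>
      rw [Finsupp.smul_single, pairV_single, pairV_single, smul_eq_mul, mul_assoc]

lemma pairV_zero_right (w : Vmod) : pairV w 0 = 0 := by
  simp [pairV]

lemma pairV_add_right (w v v' : Vmod) : pairV w (v + v') = pairV w v + pairV w v' := by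
  classical
  rw [pairV, pairV, pairV, ← Finsupp.sum_add]
  apply Finsupp.sum_congr
  intro i _
  simp [mul_add]

lemma pairV_smul_right (r : K) (w v : Vmod) : pairV w (r • v) = r * pairV w v := by
  classical
  rw [pairV, pairV, Finsupp.mul_sum]
  apply Finsupp.sum_congr
  intro i _
  simp [Finsupp.smul_apply, smul_eq_mul]; ring

lemma pair_ext (f g : Module.End K Vmod)
    (h : ∀ j k : ℤ, pairV (f (Finsupp.single j 1)) (Finsupp.single k 1) =
      pairV (Finsupp.single j 1) (g (Finsupp.single k 1))) :
    ∀ w v : Vmod, pairV (f w) v = pairV w (g v) := by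
  intro w v
  induction w using Finsupp.induction_linear with
  | zero => simp [pairV_zero_left, pairV_single, map_zero]
  | add w w' hw hw' => rw [map_add, pairV_add_left, pairV_add_left, hw, hw']
  | single j c =>
    have hc : (Finsupp.single j c : Vmod) = c • Finsupp.single j 1 := by
      rw [Finsupp.smul_single, smul_eq_mul, mul_one]
    rw [hc, map_smul, pairV_smul_left, pairV_smul_left]
    congr 1
    induction v using Finsupp.induction_linear with
    | zero => simp [pairV_zero_right, map_zero]
    | add v v' hv hv' => rw [map_add, pairV_add_right, pairV_add_right, hv, hv']
    | single k d =>
      have hd : (Finsupp.single k d : Vmod) = d • Finsupp.single k 1 := by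
        rw [Finsupp.smul_single, smul_eq_mul, mul_one]
      rw [hd, map_smul, pairV_smul_right, pairV_smul_right, h]

lemma q_ne_zero : q ≠ 0 := RatFunc.X_ne_zero

/-- Equip `V` with the right `el^ε`-action `v_j·ℰ_i = δ_{ij}(v_{i+1} + q^ε v_{i-1})` and
`V^⊛` with the right `el^{-ε}`-action `v^j·ℰ_i = δ_{i+2,j}q^{-ε}v^{i+1} + δ_{ij}v^{i+1}`,
and let `σ : el^{-ε} → el^ε` be the algebra anti-isomorphism with `σ ℰ_i = q^{-ε}ℰ_{i+1}`.
Then `(w·u, v) = (w, v·σ(u))` for all `w ∈ V^⊛`, `v ∈ V` and `u ∈ el^{-ε}`. -/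
theorem pairing_adjunction (ε : ℤ) (hε : ε = 1 ∨ ε = -1)
    (ρV : el ε →ₐ[K] (Module.End K Vmod)ᵐᵒᵖ)
    (hρV : ∀ i j : ℤ, (ρV (Egen ε i)).unop (Finsupp.single j (1 : K)) =
      if i = j then
        Finsupp.single (i + 1) (1 : K) + (q ^ ε) • Finsupp.single (i - 1) (1 : K)
      else 0)
    (ρD : el (-ε) →ₐ[K] (Module.End K Vmod)ᵐᵒᵖ)
    (hρD : ∀ i j : ℤ, (ρD (Egen (-ε) i)).unop (Finsupp.single j (1 : K)) =
      (if j = i + 2 then (q ^ (-ε)) • Finsupp.single (i + 1) (1 : K) else 0) +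
        (if i = j then Finsupp.single (i + 1) (1 : K) else 0))
    (σ : el (-ε) →ₗ[K] el ε)
    (hσmul : ∀ x y : el (-ε), σ (x * y) = σ y * σ x) (hσone : σ 1 = 1)
    (hσgen : ∀ i : ℤ, σ (Egen (-ε) i) = (q ^ (-ε)) • Egen ε (i + 1)) :
    ∀ (u : el (-ε)) (w v : Vmod),
      pairV ((ρD u).unop w) v = pairV w ((ρV (σ u)).unop v) := by
  intro u
  obtain ⟨x, rfl⟩ := RingQuot.mkAlgHom_surjective K (elRel (-ε)) u
  induction x using FreeAlgebra.induction with
  | grade0 r =>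
    rw [AlgHom.commutes]
    have hσ : σ (algebraMap K (el (-ε)) r) = algebraMap K (el ε) r := by
      rw [Algebra.algebraMap_eq_smul_one, map_smul, hσone,
        ← Algebra.algebraMap_eq_smul_one]
    rw [hσ]
    intro w v
    rw [AlgHom.commutes, AlgHom.commutes]
    have h1 : ∀ (m : Vmod), ((algebraMap K (Module.End K Vmod)ᵐᵒᵖ r).unop) m = r • m := by
      intro m
      rw [MulOpposite.algebraMap_apply, MulOpposite.unop_op, Module.algebraMap_end_apply]
    rw [h1, h1, pairV_smul_left, pairV_smul_right]
  | grade1 i =>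
    have hmk : RingQuot.mkAlgHom K (elRel (-ε)) (FreeAlgebra.ι K i) = Egen (-ε) i := rfl
    rw [hmk, hσgen]
    apply pair_ext
    intro j k
    rw [hρD i j, map_smul, MulOpposite.unop_smul, LinearMap.smul_apply,
      pairV_smul_right, hρV (i+1) k, pairV_add_left]
    have hqq : q ^ (-ε) * q ^ ε = 1 := by
      rw [← zpow_add₀ q_ne_zero]; simp
    split_ifs <;>
      simp only [pairV_add_left, pairV_add_right, pairV_smul_left, pairV_smul_right,
        pairV_single, pairV_zero_left, pairV_zero_right, Finsupp.add_apply,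
        Finsupp.smul_apply, Finsupp.single_apply, smul_eq_mul, zero_add, add_zero,
        mul_one, one_mul, mul_zero, zero_mul] <;>
      split_ifs <;>
      first
        | ring1
        | (exfalso; omega)
        | linear_combination hqq
        | linear_combination -hqq
        | linear_combination (q ^ (-ε)) * hqq
        | linear_combination (q ^ ε) * hqq
  | mul a b ha hb =>
    intro w v
    rw [map_mul, map_mul, hσmul, map_mul, MulOpposite.unop_mul,
      MulOpposite.unop_mul, Module.End.mul_apply, Module.End.mul_apply, hb, ha]
  | add a b ha hb =>
    intro w v
    rw [map_add, map_add, map_add, map_add, MulOpposite.unop_add,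
      MulOpposite.unop_add, LinearMap.add_apply, LinearMap.add_apply,
      pairV_add_left, pairV_add_right, ha, hb]


end
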